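/- arXiv:0806.3301 — 3 statements merged into one kernel-verified Lean document; each statement's English description precedes it below -/
import Mathlib

section
/- Let x₁, …, xₙ be real numbers with n odd, let μ = (1/n)·Σᵢ xᵢ be their mean, σ = √((1/n)·Σᵢ (xᵢ − μ)²) their standard deviation, and let m be their median, i.e., the k-th smallest value with k = (n+1)/2. Then μ − σ ≤ m ≤ μ + σ. -/
/-- For a sorted list of length `2k+1`, the middle element minimizes the sum of
absolute deviations. -/
lemma median_sum_abs_le (k : ℕ) (l : List ℝ) (hl : l.length = 2 * k + 1)
    (hs : l.Pairwise (· ≤ ·)) (c : ℝ) :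
    ∑ i ∈ Finset.range (2 * k + 1), |l.getD i 0 - l.getD k 0| ≤
    ∑ i ∈ Finset.range (2 * k + 1), |l.getD i 0 - c| := by
  set m := l.getD k 0 with hmdef
  have hmono : ∀ i j : ℕ, i ≤ j → j < l.length → l.getD i 0 ≤ l.getD j 0 := by
    intro i j hij hj
    have hi : i < l.length := lt_of_le_of_lt hij hj
    rw [List.getD_eq_getElem _ _ hi, List.getD_eq_getElem _ _ hj]
    exact hs.rel_get_of_le hij
  rw [← sub_nonneg, ← Finset.sum_sub_distrib]
  have hgen : ∀ i : ℕ, -|c - m| ≤ |l.getD i 0 - c| - |l.getD i 0 - m| := by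
    intro i
    have h2 := abs_sub_abs_le_abs_sub (l.getD i 0 - m) (l.getD i 0 - c)
    have h3 : |(l.getD i 0 - m) - (l.getD i 0 - c)| = |c - m| := by
      rw [show (l.getD i 0 - m) - (l.getD i 0 - c) = c - m by ring]
    linarith
  rcases le_total c m with hc | hc
  · have hsplit := Finset.sum_Ico_consecutive
      (f := fun i => |l.getD i 0 - c| - |l.getD i 0 - m|)
      (m := 0) (n := k) (k := 2 * k + 1) (by omega) (by omega)
    rw [Finset.range_eq_Ico, ← hsplit]
    have h1 : ∀ i ∈ Finset.Ico 0 k, c - m ≤ |l.getD i 0 - c| - |l.getD i 0 - m| := by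
      intro i _
      have := hgen i
      rw [abs_of_nonpos (by linarith)] at this
      linarith
    have h2 : ∀ i ∈ Finset.Ico k (2 * k + 1), m - c ≤ |l.getD i 0 - c| - |l.getD i 0 - m| := by
      intro i hi
      rw [Finset.mem_Ico] at hi
      have hx : m ≤ l.getD i 0 := hmono k i hi.1 (by omega)
      have e1 : |l.getD i 0 - m| = l.getD i 0 - m := abs_of_nonneg (by linarith)
      have e2 : l.getD i 0 - c ≤ |l.getD i 0 - c| := le_abs_self _
      linarith
    have b1 := Finset.sum_le_sum h1
    have b2 := Finset.sum_le_sum h2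
    rw [Finset.sum_const, Nat.card_Ico] at b1 b2
    simp only [Nat.sub_zero, nsmul_eq_mul] at b1 b2
    have hcard : (2 * k + 1 - k : ℕ) = k + 1 := by omega
    rw [hcard] at b2
    push_cast at b1 b2
    nlinarith [b1, b2]
  · have hsplit := Finset.sum_Ico_consecutive
      (f := fun i => |l.getD i 0 - c| - |l.getD i 0 - m|)
      (m := 0) (n := k + 1) (k := 2 * k + 1) (by omega) (by omega)
    rw [Finset.range_eq_Ico, ← hsplit]
    have h1 : ∀ i ∈ Finset.Ico 0 (k + 1), c - m ≤ |l.getD i 0 - c| - |l.getD i 0 - m| := by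
      intro i hi
      rw [Finset.mem_Ico] at hi
      have hx : l.getD i 0 ≤ m := hmono i k (by omega) (by omega)
      have e1 : |l.getD i 0 - m| = -(l.getD i 0 - m) := abs_of_nonpos (by linarith)
      have e2 : -(l.getD i 0 - c) ≤ |l.getD i 0 - c| := neg_le_abs _
      linarith
    have h2 : ∀ i ∈ Finset.Ico (k + 1) (2 * k + 1), m - c ≤ |l.getD i 0 - c| - |l.getD i 0 - m| := by
      intro i _
      have := hgen i
      rw [abs_of_nonneg (by linarith)] at this
      linarith
    have b1 := Finset.sum_le_sum h1
    have b2 := Finset.sum_le_sum h2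
    rw [Finset.sum_const, Nat.card_Ico] at b1 b2
    simp only [Nat.sub_zero, nsmul_eq_mul] at b1 b2
    have hcard : (2 * k + 1 - (k + 1) : ℕ) = k := by omega
    rw [hcard] at b2
    push_cast at b1 b2
    nlinarith [b1, b2]

/-- For an odd number of data points, the empirical median (the `(n+1)/2`-th
smallest value, i.e. the entry at 0-based index `n / 2` of the sorted list)
lies within one (empirical) standard deviation of the empirical mean. -/
theorem empirical_median_within_one_sd_of_mean
    (n : ℕ) (hn : Odd n) (x : Fin n → ℝ)
    (μ σ m : ℝ)
    (hμ : μ = (∑ i, x i) / n)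
    (hσ : σ = Real.sqrt ((∑ i, (x i - μ) ^ 2) / n))
    (hm : m = ((List.ofFn x).mergeSort (· ≤ ·))[n / 2]!) :
    μ - σ ≤ m ∧ m ≤ μ + σ := by
  obtain ⟨k, hk⟩ := hn
  set l := (List.ofFn x).mergeSort (· ≤ ·) with hldef
  have hperm : l.Perm (List.ofFn x) := List.mergeSort_perm _ _
  have hlen : l.length = n := by rw [hperm.length_eq, List.length_ofFn]
  have hsort : l.Pairwise (· ≤ ·) := List.pairwise_mergeSort' (· ≤ ·) (List.ofFn x)
  have hn2 : n / 2 = k := by omega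
  have hkl : k < l.length := by omega
  have hm' : m = l.getD k 0 := by
    rw [hm, hn2, List.getD_eq_getElem _ _ hkl, getElem!_pos l k hkl]
  have htrans : ∀ f : ℝ → ℝ, ∑ i, f (x i) = ∑ i ∈ Finset.range n, f (l.getD i 0) := by
    intro f
    have h1 : ∑ i, f (x i) = ((List.ofFn x).map f).sum := by
      rw [List.map_ofFn, List.sum_ofFn]
      rfl
    have h2 : ((List.ofFn x).map f).sum = (l.map f).sum := ((hperm.map f).sum_eq).symm
    have h3 : (l.map f).sum = ∑ i ∈ Finset.range l.length, f (l.getD i 0) := by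
      rw [← List.ofFn_getElem_eq_map, List.sum_ofFn,
        ← Fin.sum_univ_eq_sum_range (fun i => f (l.getD i 0)) l.length]
      exact Finset.sum_congr rfl fun i _ => by
        rw [List.getD_eq_getElem _ _ i.isLt]
    rw [h1, h2, h3, hlen]
  have hn0 : (0:ℝ) < n := by
    have : 0 < n := by omega
    exact_mod_cast this
  have hsum : ∑ i, x i = n * μ := by
    rw [hμ]; field_simp
  have hA : |∑ i, (x i - m)| ≤ ∑ i, |x i - m| := Finset.abs_sum_le_sum_abs _ _
  have hA' : ∑ i, (x i - m) = n * (μ - m) := by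
    rw [Finset.sum_sub_distrib, hsum, Finset.sum_const, Finset.card_univ, Fintype.card_fin,
      nsmul_eq_mul]
    ring
  have hB : ∑ i, |x i - m| ≤ ∑ i, |x i - μ| := by
    rw [htrans (fun t => |t - m|), htrans (fun t => |t - μ|), hm']
    have := median_sum_abs_le k l (by omega) hsort μ
    rw [show n = 2 * k + 1 from hk]
    exact this
  have hC : (∑ i, |x i - μ|) ^ 2 ≤ n * ∑ i, (x i - μ) ^ 2 := by
    have := sq_sum_le_card_mul_sum_sq (s := Finset.univ) (f := fun i => |x i - μ|)
    simpa [sq_abs] using this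
  have hQ : (0:ℝ) ≤ ∑ i, (x i - μ) ^ 2 := Finset.sum_nonneg fun i _ => sq_nonneg _
  have hS : (0:ℝ) ≤ ∑ i, |x i - μ| := Finset.sum_nonneg fun i _ => abs_nonneg _
  have hkey : (n : ℝ) * |μ - m| ≤ ∑ i, |x i - μ| := by
    calc (n : ℝ) * |μ - m| = |∑ i, (x i - m)| := by
          rw [hA', abs_mul, abs_of_pos hn0]
      _ ≤ ∑ i, |x i - m| := hA
      _ ≤ ∑ i, |x i - μ| := hB
  have hsq : |μ - m| ^ 2 ≤ (∑ i, (x i - μ) ^ 2) / n := by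
    rw [le_div_iff₀ hn0]
    have h1 : ((n:ℝ) * |μ - m|) ^ 2 ≤ (∑ i, |x i - μ|) ^ 2 :=
      pow_le_pow_left₀ (by positivity) hkey 2
    have h2 : (n:ℝ) * (|μ - m| ^ 2 * n) ≤ (n:ℝ) * ∑ i, (x i - μ) ^ 2 := by nlinarith [h1, hC]
    exact le_of_mul_le_mul_left h2 hn0
  have habs : |μ - m| ≤ σ := by
    rw [hσ]
    exact (Real.le_sqrt (abs_nonneg _) (by positivity)).mpr hsq
  rw [abs_le] at habs
  constructor <;> linarith [habs.1, habs.2]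
end

section
/- Let X₁, X₂, … be i.i.d. real-valued random variables with E[X₁⁴] < ∞, variance σ², and for each n ≥ 2 let σ̂ₙ = √((1/n)·Σᵢ₌₁ⁿ (Xᵢ − X̄ₙ)²) be the empirical standard deviation, where X̄ₙ is the sample mean. Then for every ε > 0, P(σ̂ₙ − σ > ε) = O(n⁻¹): there exists a constant C (depending on ε and the distribution of X₁) such that P(σ̂ₙ − σ > ε) ≤ C/n for all n ≥ 2. -/
open MeasureTheory ProbabilityTheory Finset

set_option maxHeartbeats 1000000 in
/-- For i.i.d. random variables with a finite fourth moment, the probability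
that the empirical standard deviation exceeds the true standard deviation by
more than `ε` is `O(1/n)`: there is a constant `C` (depending on `ε` and the
distribution) such that `P(σ̂ₙ − σ > ε) ≤ C / n` for all `n ≥ 2`. -/
theorem prob_empirical_sd_exceeds_isBigO_inv
    {Ω : Type*} [MeasurableSpace Ω] (P : Measure Ω) [IsProbabilityMeasure P]
    (X : ℕ → Ω → ℝ)
    (hmeas : ∀ i, Measurable (X i))
    (hindep : iIndepFun X P)
    (hident : ∀ i, Measure.map (X i) P = Measure.map (X 0) P)
    (hL4 : MeasureTheory.MemLp (X 0) 4 P)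
    (σ : ℝ) (hσ : σ = Real.sqrt (variance (X 0) P)) :
    ∀ ε > (0 : ℝ), ∃ C : ℝ, ∀ n ≥ 2,
      P {ω | Real.sqrt ((∑ i ∈ range n,
            (X i ω - (∑ j ∈ range n, X j ω) / n) ^ 2) / n) - σ > ε}
        ≤ ENNReal.ofReal (C / n) := by
  intro ε hε
  have idd : ∀ i, IdentDistrib (X i) (X 0) P P := fun i =>
    ⟨(hmeas i).aemeasurable, (hmeas 0).aemeasurable, hident i⟩
  have hL4i : ∀ i, MemLp (X i) 4 P := fun i => (idd i).symm.memLp_snd hL4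
  have hL2i : ∀ i, MemLp (X i) 2 P := fun i =>
    (hL4i i).mono_exponent (by norm_num)
  set Y : ℕ → Ω → ℝ := fun i ω => X i ω ^ 2 with hYdef
  have hYL2 : ∀ i, MemLp (Y i) 2 P := fun i => by
    have h := (hL4i i).smul (hL4i i) (p := 4) (q := 4) (r := 2)
      (hpqr := ⟨by rw [show (4:ENNReal) = 2 * 2 by norm_num, ENNReal.mul_inv (by simp) (by simp), ← two_mul, ← mul_assoc, ENNReal.mul_inv_cancel (by simp) (by simp), one_mul]⟩)
    have he : (X i) • (X i) = Y i := by funext ω; simp [hYdef, smul_eq_mul, sq]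
    rwa [he] at h
  have iddY : ∀ i, IdentDistrib (Y i) (Y 0) P P := fun i =>
    (idd i).comp (measurable_id.pow_const 2)
  have hYindep : iIndepFun Y P :=
    hindep.comp (fun _ => (· ^ 2)) (fun _ => measurable_id.pow_const 2)
  set μ0 : ℝ := ∫ ω, X 0 ω ∂P with hμ0def
  set m2 : ℝ := ∫ ω, Y 0 ω ∂P with hm2def
  have hvar : variance (X 0) P = m2 - μ0 ^ 2 := by
    rw [variance_eq_sub (hL2i 0)]; rfl
  have hσ0 : 0 ≤ σ := hσ ▸ Real.sqrt_nonneg _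
  have hσsq : σ ^ 2 = m2 - μ0 ^ 2 := by
    rw [hσ, Real.sq_sqrt (variance_nonneg _ _), hvar]
  set δ : ℝ := ε ^ 2 / 2 with hδdef
  have hδ : 0 < δ := by positivity
  set η : ℝ := δ / (2 * |μ0| + 1) with hηdef
  have hη : 0 < η := by positivity
  set v2 : ℝ := variance (Y 0) P with hv2def
  set v1 : ℝ := variance (X 0) P with hv1def
  have hv2n : 0 ≤ v2 := variance_nonneg _ _
  have hv1n : 0 ≤ v1 := variance_nonneg _ _
  refine ⟨v2 / δ ^ 2 + v1 / η ^ 2, fun n hn => ?_⟩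
  have hnpos : (0 : ℝ) < n := by
    have : 0 < n := by omega
    exact_mod_cast this
  set F1 : Ω → ℝ := ∑ i ∈ range n, X i with hF1def
  set F2 : Ω → ℝ := ∑ i ∈ range n, Y i with hF2def
  have hF1L2 : MemLp F1 2 P := memLp_finset_sum' _ fun i _ => hL2i i
  have hF2L2 : MemLp F2 2 P := memLp_finset_sum' _ fun i _ => hYL2 i
  have hIF1 : ∫ ω, F1 ω ∂P = n * μ0 := by
    have h1 : ∫ ω, F1 ω ∂P = ∑ i ∈ range n, ∫ ω, X i ω ∂P := by
      simp only [hF1def, Finset.sum_apply]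
      exact integral_finset_sum _ fun i _ => (hL2i i).integrable one_le_two
    rw [h1, Finset.sum_congr rfl fun i _ => (idd i).integral_eq]
    simp [mul_comm, hμ0def]
  have hIF2 : ∫ ω, F2 ω ∂P = n * m2 := by
    have h1 : ∫ ω, F2 ω ∂P = ∑ i ∈ range n, ∫ ω, Y i ω ∂P := by
      simp only [hF2def, Finset.sum_apply]
      exact integral_finset_sum _ fun i _ => (hYL2 i).integrable one_le_two
    rw [h1, Finset.sum_congr rfl fun i _ => (iddY i).integral_eq]
    simp [mul_comm, hm2def]
  have hVF1 : variance F1 P = n * v1 := by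
    rw [hF1def, IndepFun.variance_sum (fun i _ => hL2i i)
      (fun i _ j _ hij => hindep.indepFun hij),
      Finset.sum_congr rfl fun i _ => (idd i).variance_eq]
    simp [mul_comm, hv1def]
  have hVF2 : variance F2 P = n * v2 := by
    rw [hF2def, IndepFun.variance_sum (fun i _ => hYL2 i)
      (fun i _ j _ hij => hYindep.indepFun hij),
      Finset.sum_congr rfl fun i _ => (iddY i).variance_eq]
    simp [mul_comm, hv2def]
  have hC2 := meas_ge_le_variance_div_sq (μ := P) hF2L2 (c := n * δ) (by positivity)
  have hC1 := meas_ge_le_variance_div_sq (μ := P) hF1L2 (c := n * η) (by positivity)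
  have hsub : {ω | Real.sqrt ((∑ i ∈ range n,
        (X i ω - (∑ j ∈ range n, X j ω) / n) ^ 2) / n) - σ > ε}
      ⊆ {ω | (n : ℝ) * δ ≤ |F2 ω - ∫ a, F2 a ∂P|}
        ∪ {ω | (n : ℝ) * η ≤ |F1 ω - ∫ a, F1 a ∂P|} := by
    intro ω hω
    by_contra hc
    simp only [Set.mem_union, Set.mem_setOf_eq, not_or, not_le] at hc
    obtain ⟨h2, h1⟩ := hc
    rw [hIF2] at h2
    rw [hIF1] at h1
    have hF1ω : F1 ω = ∑ j ∈ range n, X j ω := by simp [hF1def]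
    have hF2ω : F2 ω = ∑ j ∈ range n, Y j ω := by simp [hF2def]
    set M : ℝ := (∑ j ∈ range n, X j ω) / n with hMdef
    have hω' : ε < Real.sqrt ((∑ i ∈ range n, (X i ω - M) ^ 2) / n) - σ := hω
    have hsum : ∑ i ∈ range n, (X i ω - M) ^ 2 = F2 ω - n * M ^ 2 := by
      have hnM : (∑ j ∈ range n, X j ω) = n * M := by
        rw [hMdef]; field_simp
      have hterm : ∀ i ∈ range n,
          (X i ω - M) ^ 2 = Y i ω - 2 * M * X i ω + M ^ 2 := fun i _ => by
        simp only [hYdef]; ring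
      rw [Finset.sum_congr rfl hterm, Finset.sum_add_distrib, Finset.sum_sub_distrib,
        ← Finset.mul_sum, Finset.sum_const, card_range, nsmul_eq_mul, hnM, hF2ω]
      ring
    have hQ : (σ + ε) ^ 2 < (∑ i ∈ range n, (X i ω - M) ^ 2) / n := by
      have h0 : σ + ε < Real.sqrt ((∑ i ∈ range n, (X i ω - M) ^ 2) / n) := by
        linarith
      exact (Real.lt_sqrt (by linarith)).1 h0
    rw [hsum] at hQ
    have he : (F2 ω - n * M ^ 2) / n = F2 ω / n - M ^ 2 := by field_simp
    rw [he] at hQ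
    have hA : F2 ω / n - m2 < δ := by
      have h' : F2 ω - n * m2 < n * δ := (abs_lt.1 h2).2
      rw [sub_lt_iff_lt_add, div_lt_iff₀ hnpos]
      linarith
    have hB : |M - μ0| < η := by
      have heq : M - μ0 = (F1 ω - n * μ0) / n := by
        rw [hMdef, hF1ω]; field_simp
      rw [heq, abs_div, abs_of_pos hnpos, div_lt_iff₀ hnpos]
      linarith
    have h2δ : σ ^ 2 + 2 * δ ≤ (σ + ε) ^ 2 := by
      rw [hδdef]; nlinarith [mul_nonneg hσ0 hε.le]
    have hμM : δ < μ0 ^ 2 - M ^ 2 := by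
      have := hσsq
      linarith
    have hMlt : |M| < |μ0| := sq_lt_sq.1 (by linarith)
    have hfac : μ0 ^ 2 - M ^ 2 ≤ |M - μ0| * (|M| + |μ0|) := by
      calc μ0 ^ 2 - M ^ 2 = -((M - μ0) * (M + μ0)) := by ring
        _ ≤ |(M - μ0) * (M + μ0)| := neg_le_abs _
        _ = |M - μ0| * |M + μ0| := abs_mul _ _
        _ ≤ |M - μ0| * (|M| + |μ0|) :=
            mul_le_mul_of_nonneg_left (abs_add_le _ _) (abs_nonneg _)
    have hηeq : η * (2 * |μ0| + 1) = δ := by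
      rw [hηdef]; field_simp
    have hlt : |M - μ0| * (|M| + |μ0|) < η * (2 * |μ0| + 1) := by
      have hb : |M| + |μ0| < 2 * |μ0| + 1 := by linarith
      calc |M - μ0| * (|M| + |μ0|) ≤ |M - μ0| * (2 * |μ0| + 1) :=
            mul_le_mul_of_nonneg_left (le_of_lt hb) (abs_nonneg _)
        _ < η * (2 * |μ0| + 1) := by
            apply mul_lt_mul_of_pos_right hB; positivity
    linarith
  calc P {ω | Real.sqrt ((∑ i ∈ range n,
        (X i ω - (∑ j ∈ range n, X j ω) / n) ^ 2) / n) - σ > ε}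
      ≤ P ({ω | (n : ℝ) * δ ≤ |F2 ω - ∫ a, F2 a ∂P|}
        ∪ {ω | (n : ℝ) * η ≤ |F1 ω - ∫ a, F1 a ∂P|}) := measure_mono hsub
    _ ≤ P {ω | (n : ℝ) * δ ≤ |F2 ω - ∫ a, F2 a ∂P|}
        + P {ω | (n : ℝ) * η ≤ |F1 ω - ∫ a, F1 a ∂P|} := measure_union_le _ _
    _ ≤ ENNReal.ofReal (variance F2 P / ((n : ℝ) * δ) ^ 2)
        + ENNReal.ofReal (variance F1 P / ((n : ℝ) * η) ^ 2) := add_le_add hC2 hC1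
    _ = ENNReal.ofReal ((v2 / δ ^ 2 + v1 / η ^ 2) / n) := by
        rw [hVF2, hVF1, ← ENNReal.ofReal_add (by positivity) (by positivity)]
        congr 1
        field_simp
end

section
/- Let x₁, …, xₙ be real numbers with n odd, mean μ = (1/n)·Σᵢ xᵢ, standard deviation σ = √((1/n)·Σᵢ (xᵢ − μ)²) with σ > 0, and median m (the k-th smallest value with k = (n+1)/2). For any integer B ≥ 1, partition [μ − σ, μ + σ] into the B equally spaced bins [μ − σ + (2σ/B)·i, μ − σ + (2σ/B)·(i+1)) for i = 0, …, B − 1. Then there exists i ∈ {0, …, B − 1} such that the distance from m to the midpoint of the i-th bin is at most σ/B, i.e., |m − (μ − σ + (2i+1)·σ/B)| ≤ σ/B. -/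
private lemma sum_split_mid (k : ℕ) (a : ℕ → ℝ) :
    ∑ j ∈ Finset.range (2*k+1), a j
      = (∑ j ∈ Finset.range k, (a j + a (2*k - j))) + a k := by
  have h1 : ∑ j ∈ Finset.range (2*k+1), a j
      = ∑ j ∈ Finset.range (k+1), a j + ∑ j ∈ Finset.Ico (k+1) (2*k+1), a j := by
    rw [Finset.range_eq_Ico, Finset.range_eq_Ico]
    exact (Finset.sum_Ico_consecutive a (by omega : 0 ≤ k+1) (by omega : k+1 ≤ 2*k+1)).symm
  have h2 : ∑ j ∈ Finset.Ico (k+1) (2*k+1), a j = ∑ j ∈ Finset.range k, a (2*k - j) := by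
    refine Finset.sum_nbij' (fun j => 2*k - j) (fun j => 2*k - j) ?_ ?_ ?_ ?_ ?_
    all_goals intro a ha
    all_goals simp only [Finset.mem_Ico, Finset.mem_range] at *
    · omega
    · omega
    · omega
    · omega
    · congr 1; omega
  rw [h1, h2, Finset.sum_range_succ, Finset.sum_add_distrib]; ring

private lemma bin_arith (σ t : ℝ) (i : ℕ) (B : ℝ)
    (hlo : 2*(i:ℝ)*σ/B ≤ t) (hhi : t ≤ (2*(i:ℝ)+2)*σ/B) :
    |t - (2*(i:ℝ)+1)*σ/B| ≤ σ/B := by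
  rw [abs_le]
  constructor <;> ring_nf at hlo hhi ⊢ <;> linarith

/-- Accuracy guarantee of the binapprox algorithm: for an odd number of data
points with positive standard deviation, if `[μ − σ, μ + σ]` is partitioned
into `B` equally spaced bins, then the median (the entry at 0-based index
`n / 2` of the sorted list) is within `σ / B` of the midpoint of some bin. -/
theorem binapprox_accuracy
    (n : ℕ) (hn : Odd n) (x : Fin n → ℝ)
    (μ σ m : ℝ)
    (hμ : μ = (∑ i, x i) / n)
    (hσ : σ = Real.sqrt ((∑ i, (x i - μ) ^ 2) / n))
    (hσpos : 0 < σ)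
    (hm : m = ((List.ofFn x).mergeSort (· ≤ ·))[n / 2]!)
    (B : ℕ) (hB : 1 ≤ B) :
    ∃ i : ℕ, i < B ∧
      |m - (μ - σ + (2 * (i : ℝ) + 1) * σ / B)| ≤ σ / B := by
  obtain ⟨k, hk⟩ := hn
  set L := (List.ofFn x).mergeSort (· ≤ ·) with hLdef
  have hlen : L.length = n := by
    rw [hLdef, List.length_mergeSort, List.length_ofFn]
  have hsort : L.Pairwise (· ≤ ·) := List.pairwise_mergeSort' _ _
  have hperm : L.Perm (List.ofFn x) := List.mergeSort_perm _ _
  have hnpos : 0 < n := by omega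
  have hnR : (0:ℝ) < n := by exact_mod_cast hnpos
  -- transfer sums
  have hsum : ∀ f : ℝ → ℝ, ∑ j ∈ Finset.range n, f (L[j]!) = ∑ i, f (x i) := by
    intro f
    have h1 : (L.map f).sum = ∑ i, f (x i) := by
      rw [(hperm.map f).sum_eq, List.map_ofFn, List.sum_ofFn]; rfl
    have h2 : (L.map f).sum = ∑ j ∈ Finset.range L.length, f (L[j]!) := by
      conv_lhs => rw [← List.ofFn_get L]
      rw [List.map_ofFn, List.sum_ofFn]
      rw [← Fin.sum_univ_eq_sum_range (fun j => f (L[j]!)) L.length]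
      refine Finset.sum_congr rfl fun i _ => ?_
      simp [Function.comp, List.get_eq_getElem, getElem!_pos L i.1 i.2]
    rw [← h1, h2, hlen]
  -- monotonicity of sorted access
  have hmono : ∀ i j : ℕ, i ≤ j → j < n → L[i]! ≤ L[j]! := by
    intro i j hij hj
    have hj' : j < L.length := by omega
    have hi : i < L.length := by omega
    rw [getElem!_pos L i hi, getElem!_pos L j hj']
    have := hsort.rel_get_of_le (a := ⟨i, hi⟩) (b := ⟨j, hj'⟩) hij
    simpa [List.get_eq_getElem] using this
  have hkn : n / 2 = k := by omega
  have hmk : m = L[k]! := by rw [hm, ← hkn]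
  -- median minimizes sum of absolute deviations (vs μ)
  have key : ∑ j ∈ Finset.range n, |L[j]! - m| ≤ ∑ j ∈ Finset.range n, |L[j]! - μ| := by
    rw [hk]
    rw [sum_split_mid k (fun j => |L[j]! - m|), sum_split_mid k (fun j => |L[j]! - μ|)]
    have hmid : |L[k]! - m| ≤ |L[k]! - μ| := by
      rw [hmk, sub_self, abs_zero]; exact abs_nonneg _
    refine add_le_add (Finset.sum_le_sum fun j hj => ?_) hmid
    have hjk : j < k := Finset.mem_range.mp hj
    have h1 : L[j]! ≤ m := hmk ▸ hmono j k (by omega) (by omega)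
    have h2 : m ≤ L[(2*k - j)]! := hmk ▸ hmono k (2*k - j) (by omega) (by omega)
    have h3 : -(|L[j]! - μ|) ≤ L[j]! - μ := neg_abs_le _
    have h4 : L[(2*k - j)]! - μ ≤ |L[(2*k - j)]! - μ| := le_abs_self _
    rw [abs_of_nonpos (by linarith), abs_of_nonneg (by linarith)]
    linarith
  -- variance identity and Cauchy-Schwarz
  have hvar : ∑ i, (x i - μ)^2 = n * σ^2 := by
    have h0 : (0:ℝ) ≤ (∑ i, (x i - μ) ^ 2) / n :=
      div_nonneg (Finset.sum_nonneg fun i _ => sq_nonneg _) hnR.le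
    have := Real.sq_sqrt h0
    rw [← hσ] at this
    rw [this, mul_div_cancel₀ _ hnR.ne']
  have cs : ∑ i, |x i - μ| ≤ n * σ := by
    have h1 : (∑ i, |x i - μ|)^2 ≤ (n:ℝ) * ∑ i, (x i - μ)^2 := by
      have := sq_sum_le_card_mul_sum_sq (s := (Finset.univ : Finset (Fin n)))
        (f := fun i => |x i - μ|)
      simpa [sq_abs, Finset.card_univ] using this
    rw [hvar] at h1
    have h2 : (0:ℝ) ≤ ∑ i, |x i - μ| := Finset.sum_nonneg fun i _ => abs_nonneg _
    nlinarith [mul_pos hnR hσpos]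
  -- mean deviation bound: |m - μ| ≤ σ
  have hmean : |m - μ| ≤ σ := by
    have e1 : ∑ i, (x i - m) = n * (μ - m) := by
      rw [Finset.sum_sub_distrib, Finset.sum_const, Finset.card_univ, Fintype.card_fin, hμ]
      field_simp
      rw [nsmul_eq_mul]
    have e2 : |∑ i, (x i - m)| ≤ ∑ i, |x i - m| := Finset.abs_sum_le_sum_abs _ _
    rw [e1] at e2
    have e2' : (n:ℝ) * |μ - m| ≤ ∑ i, |x i - m| := by
      rwa [abs_mul, abs_of_pos hnR] at e2
    have e3 : ∑ i, |x i - m| = ∑ j ∈ Finset.range n, |L[j]! - m| :=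
      (hsum (fun t => |t - m|)).symm
    have e4 : ∑ i, |x i - μ| = ∑ j ∈ Finset.range n, |L[j]! - μ| :=
      (hsum (fun t => |t - μ|)).symm
    have e5 : (n:ℝ) * |μ - m| ≤ n * σ := by
      calc (n:ℝ) * |μ - m| ≤ ∑ i, |x i - m| := e2'
        _ = ∑ j ∈ Finset.range n, |L[j]! - m| := e3
        _ ≤ ∑ j ∈ Finset.range n, |L[j]! - μ| := key
        _ = ∑ i, |x i - μ| := e4.symm
        _ ≤ n * σ := cs
    have := le_of_mul_le_mul_left e5 hnR
    rwa [abs_sub_comm] at this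
  -- bin selection
  have hBR : (0:ℝ) < B := by exact_mod_cast hB
  set t : ℝ := m - (μ - σ) with ht
  have ht0 : 0 ≤ t := by
    have := abs_le.mp hmean; simp only [ht]; linarith [this.2]
  have ht2 : t ≤ 2 * σ := by
    have := abs_le.mp hmean; simp only [ht]; linarith [this.1]
  have hgoal : ∀ i : ℕ, 2*(i:ℝ)*σ/B ≤ t → t ≤ (2*(i:ℝ)+2)*σ/B →
      |m - (μ - σ + (2 * (i:ℝ) + 1) * σ / B)| ≤ σ / B := by
    intro i hlo hhi
    have he : m - (μ - σ + (2 * (i:ℝ) + 1) * σ / B) = t - (2*(i:ℝ)+1)*σ/B := by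
      rw [ht]; ring
    rw [he]
    exact bin_arith σ t i B hlo hhi
  by_cases hcase : Nat.floor (t * B / (2*σ)) < B
  · refine ⟨Nat.floor (t * B / (2*σ)), hcase, ?_⟩
    set f := Nat.floor (t * B / (2*σ)) with hf
    have h0 : 0 ≤ t * B / (2*σ) := by positivity
    have hf1 : (f:ℝ) ≤ t * B / (2*σ) := Nat.floor_le h0
    have hf2 : t * B / (2*σ) < f + 1 := Nat.lt_floor_add_one _
    refine hgoal f ?_ ?_
    · rw [div_le_iff₀ hBR]
      have := (le_div_iff₀ (by positivity : (0:ℝ) < 2*σ)).mp hf1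
      linarith
    · rw [le_div_iff₀ hBR]
      have := (div_lt_iff₀ (by positivity : (0:ℝ) < 2*σ)).mp hf2
      linarith
  · refine ⟨B - 1, by omega, ?_⟩
    have hgeN : B ≤ Nat.floor (t * B / (2*σ)) := by omega
    have hge : (B:ℝ) ≤ t * B / (2*σ) := by
      exact_mod_cast (Nat.le_floor_iff (by positivity)).mp hgeN
    have ht2σ : 2*σ ≤ t := by
      have := (le_div_iff₀ (by positivity : (0:ℝ) < 2*σ)).mp hge
      nlinarith
    have hcast : ((B - 1 : ℕ) : ℝ) = (B:ℝ) - 1 := by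
      push_cast [hB]; ring
    refine hgoal (B - 1) ?_ ?_
    · rw [hcast, div_le_iff₀ hBR]
      nlinarith
    · rw [hcast, le_div_iff₀ hBR]
      nlinarith
end
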